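/- Let m ∈ ℕ, let L be a ring, and let a, b ∈ L. Define the m×m matrices S by S[i,j] = [j = i+1] and U_b by U_b[i,j] = C(i,j)·(ad_a)^{i-j}(b) for i ≥ j, 0 for i < j, where ad_a(y) = a*y - y*a. Define the column vector H_c of size m by (H_c)[i] = a^i·c for c ∈ L. Then for every n ∈ ℕ and every u ∈ ℕ with 0 ≤ u ≤ m - (n+1), the u-th entry of the vector (U_b·S)^n·H_1 equals the u-th entry of H_{(b*a)^n}, i.e., equals a^u·(b*a)^n. -/

import Mathlib

lemma key_ad {L : Type*} [Ring L] (a b : L) (u : ℕ) :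
    ∑ k ∈ Finset.range (u+1), (u.choose k) • ((fun y => a*y-y*a)^[u-k] b * a^k) = a^u * b := by
  induction u with
  | zero => simp
  | succ u ih =>
    rw [Finset.sum_range_succ']
    simp only [Nat.succ_sub_succ_eq_sub, Nat.sub_zero, Nat.choose_zero_right, pow_zero,
      mul_one, one_smul, Nat.choose_succ_succ, add_smul, Finset.sum_add_distrib]
    have hrhs : a^(u+1) * b = a * (a^u * b) := by rw [pow_succ']; rw [mul_assoc]
    rw [hrhs, ← ih, Finset.mul_sum]
    have h1 : ∑ k ∈ Finset.range (u+1), a * ((u.choose k) • ((fun y => a*y-y*a)^[u-k] b * a^k)) =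
        ∑ k ∈ Finset.range (u+1), ((u.choose k) • ((fun y => a*y-y*a)^[u+1-k] b * a^k) +
          (u.choose k) • ((fun y => a*y-y*a)^[u-k] b * a^(k+1))) := by
      refine Finset.sum_congr rfl (fun k hk => ?_)
      have hk' : k ≤ u := by simpa [Nat.lt_succ_iff] using hk
      rw [mul_smul_comm, ← smul_add]
      congr 1
      have h : u + 1 - k = (u - k) + 1 := by omega
      rw [h, Function.iterate_succ_apply']
      generalize (fun y => a*y-y*a)^[u-k] b = x
      show a * (x * a^k) = (a*x - x*a) * a^k + x * a^(k+1)
      rw [sub_mul, pow_succ', mul_assoc, mul_assoc]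
      abel
    rw [h1, Finset.sum_add_distrib]
    have h3 : ∑ k ∈ Finset.range (u+1), (u.choose k) • ((fun y => a*y-y*a)^[u+1-k] b * a^k) =
        (∑ j ∈ Finset.range u, (u.choose (j+1)) • ((fun y => a*y-y*a)^[u-j] b * a^(j+1))) +
        ((fun y => a*y-y*a)^[u+1] b) := by
      rw [Finset.sum_range_succ']
      simp [Nat.succ_sub_succ_eq_sub]
    rw [h3]
    have h5 : ∑ j ∈ Finset.range (u+1), (u.choose (j+1)) • ((fun y => a*y-y*a)^[u-j] b * a^(j+1)) =
        ∑ j ∈ Finset.range u, (u.choose (j+1)) • ((fun y => a*y-y*a)^[u-j] b * a^(j+1)) := by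
      rw [Finset.sum_range_succ]
      simp
    rw [h5]
    abel

theorem stmt_9 (m : ℕ) (L : Type*) [Ring L] (a b : L)
    (S : Matrix (Fin m) (Fin m) L)
    (hS : ∀ i j : Fin m, S i j = if (j : ℕ) = (i : ℕ) + 1 then 1 else 0)
    (U : Matrix (Fin m) (Fin m) L)
    (hU : ∀ i j : Fin m, U i j =
      if (j : ℕ) ≤ (i : ℕ) then
        ((i : ℕ).choose j) • ((fun y => a * y - y * a)^[(i : ℕ) - (j : ℕ)] b)
      else 0)
    (H : L → Matrix (Fin m) (Fin 1) L)
    (hH : ∀ c, ∀ i : Fin m, ∀ j : Fin 1, H c i j = a ^ (i : ℕ) * c)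
    (n u : ℕ) (hu : u + (n + 1) ≤ m) :
    ((U * S) ^ n * H 1) ⟨u, by omega⟩ 0 = a ^ u * (b * a) ^ n := by
  induction n generalizing u with
  | zero => simp [hH]
  | succ n ih =>
    set W := (U * S) ^ n * H 1 with hWdef
    have hI : ((u : ℕ) : ℕ) = u := rfl
    rw [pow_succ', Matrix.mul_assoc, Matrix.mul_apply]
    set I : Fin m := ⟨u, by omega⟩ with hIdef
    -- inner sum lemma
    have hinner : ∀ k : Fin m, (∑ j, S k j * W j 0) =
        if h : (k : ℕ) + 1 < m then W ⟨(k : ℕ) + 1, h⟩ 0 else 0 := by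
      intro k
      by_cases h : (k : ℕ) + 1 < m
      · rw [dif_pos h, Finset.sum_eq_single (⟨(k : ℕ) + 1, h⟩ : Fin m)]
        · rw [hS]; simp
        · intro j _ hj
          rw [hS]
          have : ¬((j : ℕ) = (k : ℕ) + 1) := fun hc => hj (Fin.ext hc)
          simp [this]
        · simp
      · rw [dif_neg h]
        refine Finset.sum_eq_zero (fun j _ => ?_)
        rw [hS]
        have : ¬((j : ℕ) = (k : ℕ) + 1) := by omega
        simp [this]
    have hswap : ∑ j, (U * S) I j * W j 0 = ∑ k, U I k * (∑ j, S k j * W j 0) := by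
      simp only [Matrix.mul_apply, Finset.sum_mul]
      rw [Finset.sum_comm]
      refine Finset.sum_congr rfl (fun k _ => ?_)
      rw [Finset.mul_sum]
      exact Finset.sum_congr rfl (fun j _ => mul_assoc _ _ _)
    rw [hswap]
    have hterm : ∀ k : Fin m, U I k * (∑ j, S k j * W j 0) =
        if (k : ℕ) ≤ u then
          ((u.choose k) • ((fun y => a * y - y * a)^[u - (k : ℕ)] b)) *
            (a ^ ((k : ℕ) + 1) * (b * a) ^ n)
        else 0 := by
      intro k
      by_cases hk : (k : ℕ) ≤ u
      · rw [if_pos hk, hinner k]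
        have hklt : (k : ℕ) + 1 < m := by omega
        rw [dif_pos hklt]
        have hW : W ⟨(k : ℕ) + 1, hklt⟩ 0 = a ^ ((k : ℕ) + 1) * (b * a) ^ n :=
          ih ((k : ℕ) + 1) (by omega)
        rw [hW, hU]
        rw [if_pos (show (k : ℕ) ≤ (I : ℕ) from hk)]
      · rw [if_neg hk, hU, if_neg (show ¬ (k : ℕ) ≤ (I : ℕ) from hk)]
        simp
    rw [Finset.sum_congr rfl (fun k _ => hterm k)]
    have hconv : ∑ k : Fin m, (if (k : ℕ) ≤ u then
          ((u.choose k) • ((fun y => a * y - y * a)^[u - (k : ℕ)] b)) *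
            (a ^ ((k : ℕ) + 1) * (b * a) ^ n) else 0) =
        ∑ t ∈ Finset.range (u + 1), ((u.choose t) • ((fun y => a * y - y * a)^[u - t] b)) *
            (a ^ (t + 1) * (b * a) ^ n) := by
      rw [Fin.sum_univ_eq_sum_range (fun i => if i ≤ u then
          ((u.choose i) • ((fun y => a * y - y * a)^[u - i] b)) *
            (a ^ (i + 1) * (b * a) ^ n) else 0) m]
      rw [← Finset.sum_subset (Finset.range_subset_range.mpr (by omega : u + 1 ≤ m))
        (fun x _ hx => by
          have : ¬ x ≤ u := by simp only [Finset.mem_range] at hx; omega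
          simp [this])]
      refine Finset.sum_congr rfl (fun t ht => ?_)
      have : t ≤ u := by simpa [Finset.mem_range, Nat.lt_succ_iff] using ht
      simp [this]
    rw [hconv]
    have hk := key_ad a b u
    calc ∑ t ∈ Finset.range (u + 1), ((u.choose t) • ((fun y => a * y - y * a)^[u - t] b)) *
            (a ^ (t + 1) * (b * a) ^ n)
        = (∑ t ∈ Finset.range (u + 1), (u.choose t) • ((fun y => a * y - y * a)^[u - t] b * a ^ t)) *
            (a * (b * a) ^ n) := by
          rw [Finset.sum_mul]
          refine Finset.sum_congr rfl (fun t _ => ?_)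
          rw [smul_mul_assoc, smul_mul_assoc]
          congr 1
          simp [mul_assoc, pow_succ]
      _ = (a ^ u * b) * (a * (b * a) ^ n) := by rw [hk]
      _ = a ^ u * (b * a) ^ (n + 1) := by
          rw [pow_succ' (b * a) n]
          simp [mul_assoc]
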